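/- Let p be an odd prime and 0 ≤ n < p. Then K(p) ≡ K(n) + (-1)^n · n! · S(p-1-n) (mod p). -/

import Mathlib

/-- Kurepa's left factorial. -/
def K (n : ℕ) : ℕ := ∑ k ∈ Finset.range n, k.factorial

lemma kurepa_aux (p : ℕ) (hp : p.Prime) (hodd : Odd p) :
    ∀ m, m ≤ p - 1 →
      (K p : ZMod p) = (K (p - 1 - m) : ZMod p)
        + (-1) ^ (p - 1 - m) * ((p - 1 - m).factorial : ZMod p) * (numDerangements m : ZMod p) := by
  have hp1 : 1 ≤ p := hp.one_lt.le
  have heven : Even (p - 1) := Nat.Odd.sub_odd hodd odd_one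
  intro m
  induction m with
  | zero =>
    intro _
    have hK : K p = K (p - 1) + (p - 1).factorial := by
      have : p = (p - 1) + 1 := by omega
      rw [this, K, Finset.sum_range_succ]; rfl
    rw [Nat.sub_zero, hK, heven.neg_one_pow]
    simp [numDerangements]
  | succ m ih =>
    intro hm
    have hm' : m ≤ p - 1 := by omega
    set n' := p - 1 - (m + 1) with hn'
    have h1 : p - 1 - m = n' + 1 := by omega
    have ihe := ih hm'
    rw [h1] at ihe
    have hKs : (K (n' + 1) : ZMod p) = K n' + (n'.factorial : ZMod p) := by
      have : K (n' + 1) = K n' + n'.factorial := by rw [K, Finset.sum_range_succ]; rfl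
      rw [this]; push_cast; ring
    rw [ihe, hKs]
    have hcast : ((n' : ZMod p) + 1) = -((m : ZMod p) + 1) := by
      have hnat : n' + 1 + (m + 1) = p := by omega
      have : ((n' + 1 + (m + 1) : ℕ) : ZMod p) = ((p : ℕ) : ZMod p) := by rw [hnat]
      push_cast at this
      simp only [ZMod.natCast_self] at this
      linear_combination this
    have hfac : ((n' + 1).factorial : ZMod p) = ((n' : ZMod p) + 1) * n'.factorial := by
      rw [Nat.factorial_succ]; push_cast; ring
    have hD : (numDerangements (m + 1) : ZMod p)
        = ((m : ZMod p) + 1) * numDerangements m - (-1) ^ m := by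
      have := numDerangements_succ m
      have h2 : ((numDerangements (m + 1) : ℤ) : ZMod p)
          = (((m + 1 : ℤ) * (numDerangements m : ℤ) - (-1) ^ m : ℤ) : ZMod p) := by rw [this]
      push_cast at h2
      exact h2
    have hpow : (-1 : ZMod p) ^ n' * (-1) ^ m = -1 := by
      rw [← pow_add]
      have h2 : n' + m + 2 = p := by omega
      have : (-1 : ZMod p) ^ (n' + m) = (-1) ^ (n' + m + 2) := by
        rw [pow_add]; ring
      rw [this, h2, hodd.neg_one_pow]
    rw [hfac, hD, hcast]
    linear_combination (n'.factorial : ZMod p) * hpow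

theorem kurepa_congr_subfactorial (p n : ℕ) (hp : p.Prime) (hodd : Odd p) (hn : n < p) :
    (K p : ℤ) ≡ (K n : ℤ) + (-1) ^ n * n.factorial * numDerangements (p - 1 - n) [ZMOD p] := by
  rw [← ZMod.intCast_eq_intCast_iff]
  have hm : p - 1 - n ≤ p - 1 := Nat.sub_le _ _
  have := kurepa_aux p hp hodd (p - 1 - n) hm
  have hnn : p - 1 - (p - 1 - n) = n := by omega
  rw [hnn] at this
  push_cast
  exact this
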